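/- The map ψ is an injective isometric immersion: ψ is differentiable at every x ∈ ℝ^m with derivative Dψ_x(X) = CX − ⟨x,X⟩_{ℝ^m} w, this derivative satisfies ⟨Dψ_x(X), Dψ_x(Y)⟩ = ⟨X,Y⟩_{ℝ^m} for all X,Y ∈ ℝ^m (in particular Dψ_x is injective), and ψ is injective. -/

import Mathlib

open Module

/-- ψ is an injective isometric immersion: it is differentiable with derivative
Dψₓ(X) = CX − ⟨x,X⟩w, which satisfies ⟨Dψₓ(X),Dψₓ(Y)⟩ = ⟨X,Y⟩ (in particular
Dψₓ is injective), and ψ itself is injective. -/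
theorem stmt_17
    (m : ℕ)
    {E : Type} [NormedAddCommGroup E] [NormedSpace ℝ E] [FiniteDimensional ℝ E]
    (hE : finrank ℝ E = m + 2)
    (ip : LinearMap.BilinForm ℝ E) (hipsymm : ∀ ξ η, ip ξ η = ip η ξ)
    (e : Basis (Fin (m + 2)) ℝ E)
    (he : ∀ i j, ip (e i) (e j) =
      if i = j then (if (i : ℕ) = 0 then (-1 : ℝ) else 1) else 0)
    (v w : E) (hv0 : v ≠ 0) (hw0 : w ≠ 0)
    (hvv : ip v v = 0) (hww : ip w w = 0) (hvw : ip v w = 1)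
    (C : EuclideanSpace ℝ (Fin m) →ₗ[ℝ] E)
    (hCinj : Function.Injective C)
    (hCrange : LinearMap.range C = ip.orthogonal (Submodule.span ℝ {v, w}))
    (hC : ∀ x y : EuclideanSpace ℝ (Fin m), ip (C x) (C y) = inner ℝ x y)
    (ψ : EuclideanSpace ℝ (Fin m) → E)
    (hψ : ∀ x, ψ x = v + C x - ((1 / 2 : ℝ) * ‖x‖ ^ 2) • w) :
    Function.Injective ψ ∧
    ∀ x : EuclideanSpace ℝ (Fin m), ∃ D : EuclideanSpace ℝ (Fin m) →L[ℝ] E,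
      HasFDerivAt ψ D x ∧
      (∀ X : EuclideanSpace ℝ (Fin m), D X = C X - (inner ℝ x X : ℝ) • w) ∧
      (∀ X Y : EuclideanSpace ℝ (Fin m), ip (D X) (D Y) = (inner ℝ X Y : ℝ)) ∧
      Function.Injective D := by
  -- orthogonality of range C to v and w
  have horth : ∀ z : EuclideanSpace ℝ (Fin m), ip v (C z) = 0 ∧ ip w (C z) = 0 := by
    intro z
    have hz : C z ∈ LinearMap.range C := LinearMap.mem_range_self _ _
    rw [hCrange, LinearMap.BilinForm.mem_orthogonal_iff] at hz
    constructor
    · exact hz v (Submodule.subset_span (by simp))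
    · exact hz w (Submodule.subset_span (by simp))
  have hvC : ∀ z, ip v (C z) = 0 := fun z => (horth z).1
  have hwC : ∀ z, ip w (C z) = 0 := fun z => (horth z).2
  have hCw : ∀ z, ip (C z) w = 0 := fun z => by rw [hipsymm]; exact hwC z
  have hwv : ip w v = 1 := by rw [hipsymm]; exact hvw
  constructor
  · -- injectivity of ψ
    intro x y hxy
    rw [hψ, hψ] at hxy
    have hdiff : C x - C y =
        ((1 / 2 : ℝ) * ‖x‖ ^ 2 - (1 / 2 : ℝ) * ‖y‖ ^ 2) • w := by
      have := hxy
      rw [sub_smul]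
      abel_nf
      abel_nf at this
      linear_combination (norm := abel) this
    have hc : ((1 / 2 : ℝ) * ‖x‖ ^ 2 - (1 / 2 : ℝ) * ‖y‖ ^ 2) = 0 := by
      have := congrArg (ip v) hdiff
      simpa [map_sub, hvC, hvw] using this.symm
    apply hCinj
    have : C x - C y = 0 := by rw [hdiff, hc, zero_smul]
    exact sub_eq_zero.mp this
  · intro x
    refine ⟨LinearMap.toContinuousLinearMap C -
      ContinuousLinearMap.smulRight (innerSL ℝ x) w, ?_, ?_, ?_, ?_⟩
    · -- differentiability
      have hinner : HasFDerivAt (fun y : EuclideanSpace ℝ (Fin m) => (inner ℝ y y : ℝ))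
          ((fderivInnerCLM ℝ (x, x)).comp
            ((ContinuousLinearMap.id ℝ _).prod (ContinuousLinearMap.id ℝ _))) x :=
        (hasFDerivAt_id x).inner ℝ (hasFDerivAt_id x)
      have h2 : HasFDerivAt (fun y : EuclideanSpace ℝ (Fin m) =>
          ((1 / 2 : ℝ) * (inner ℝ y y : ℝ)) • w) _ x :=
        ((hinner.const_mul (1 / 2 : ℝ)).smul (hasFDerivAt_const w x))
      have h3 := ((hasFDerivAt_const v x).add
        (LinearMap.toContinuousLinearMap C).hasFDerivAt).sub h2
      have hψeq : ψ = fun y : EuclideanSpace ℝ (Fin m) =>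
          v + C y - ((1 / 2 : ℝ) * (inner ℝ y y : ℝ)) • w := by
        funext y
        rw [hψ, real_inner_self_eq_norm_sq]
      rw [hψeq]
      refine (h3.congr_fderiv ?_)
      ext X
      simp [fderivInnerCLM_apply, real_inner_comm x X]
      congr 1
      ring
    · intro X; simp
    · intro X Y
      simp only [ContinuousLinearMap.coe_sub', Pi.sub_apply,
        LinearMap.coe_toContinuousLinearMap', ContinuousLinearMap.smulRight_apply,
        innerSL_apply_apply]
      simp only [map_sub, map_smul, LinearMap.sub_apply, LinearMap.smul_apply,
        smul_eq_mul, hC, hCw, hww]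
      have h1 : ip w (C Y) = 0 := hwC Y
      ring_nf
      rw [h1]
      ring
    · -- injectivity of D
      intro X Y hXY
      have hD : ∀ Z : EuclideanSpace ℝ (Fin m),
          (LinearMap.toContinuousLinearMap C -
            ContinuousLinearMap.smulRight (innerSL ℝ x) w) Z = C Z - (inner ℝ x Z : ℝ) • w := by
        intro Z; simp
      have : C X - (inner ℝ x X : ℝ) • w = C Y - (inner ℝ x Y : ℝ) • w := by
        rw [← hD, ← hD, hXY]
      have hcoef : (inner ℝ x X : ℝ) = (inner ℝ x Y : ℝ) := by
        have := congrArg (ip v) (sub_eq_zero.mpr this)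
        simp only [map_sub, map_smul, map_zero, hvC, smul_eq_mul, hvw, mul_one,
          zero_sub, sub_zero, neg_neg] at this
        linarith
      apply hCinj
      rw [hcoef] at this
      exact sub_left_injective this
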